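/- Let (X, 𝒳) be a measurable space, φ : X → ℝ bounded measurable, and (X_n)_{n≥0}, (W_n)_{n≥0} two sequences of X-valued random elements on a common probability space such that: (i) X_n has the same law as W_{n+1} for every n ≥ 0; (ii) there is an ℕ-valued random variable τ with Σ_{n≥0} P(τ > n) < ∞ such that for every n, X_n = W_n almost surely on the event {τ ≤ n}; and (iii) E[φ(X_n)] → a as n → ∞ for some real a. Then for every 0 ≤ k ≤ m, the time-averaged estimator (1/(m−k+1)) Σ_{n=k}^{m} φ(X_n) + Σ_{n=k+1}^{τ−1} min{1, (n−k)/(m−k+1)} (φ(X_n) − φ(W_n)) is integrable and has expectation a. -/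

import Mathlib

open MeasureTheory Filter

open scoped ENNReal in
lemma aux_integrable_tsum {Ω : Type*} [MeasurableSpace Ω] {P : Measure Ω}
    {F : ℕ → Ω → ℝ} (hmeas : ∀ n, Measurable (F n)) (hint : ∀ n, Integrable (F n) P)
    (hsum : Summable fun n => ∫ ω, ‖F n ω‖ ∂P) :
    Integrable (fun ω => ∑' n, F n ω) P := by
  have h1 : ∀ n, ∫⁻ ω, ‖F n ω‖₊ ∂P = ENNReal.ofReal (∫ ω, ‖F n ω‖ ∂P) := fun n =>
    (ofReal_integral_norm_eq_lintegral_enorm (hint n)).symm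
  have h2 : ∑' n, ∫⁻ ω, ‖F n ω‖₊ ∂P ≠ ⊤ := by
    simp_rw [h1]
    rw [← ENNReal.ofReal_tsum_of_nonneg (fun n => integral_nonneg (fun ω => norm_nonneg _)) hsum]
    exact ENNReal.ofReal_ne_top
  have hFmeas : ∀ n, AEMeasurable (fun ω => (‖F n ω‖₊ : ℝ≥0∞)) P := fun n =>
    (hmeas n).enorm.aemeasurable
  have h3 : ∫⁻ ω, ∑' n, (‖F n ω‖₊ : ℝ≥0∞) ∂P ≠ ⊤ := by
    rw [lintegral_tsum hFmeas]; exact h2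
  have hae : ∀ᵐ ω ∂P, Summable fun n => ‖F n ω‖ := by
    refine (ae_lt_top' (AEMeasurable.ennreal_tsum hFmeas) h3).mono fun ω hω => ?_
    have := ENNReal.tsum_coe_ne_top_iff_summable_coe.mp hω.ne
    simpa using this
  have haes : AEStronglyMeasurable (fun ω => ∑' n, F n ω) P := by
    refine aestronglyMeasurable_of_tendsto_ae atTop
      (f := fun N => fun ω => ∑ n ∈ Finset.range N, F n ω)
      (fun N => (Finset.measurable_sum _ (fun n _ => hmeas n)).aestronglyMeasurable) ?_
    filter_upwards [hae] with ω hω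
    exact hω.of_norm.hasSum.tendsto_sum_nat
  refine ⟨haes, ?_⟩
  rw [hasFiniteIntegral_iff_norm]
  calc ∫⁻ ω, ENNReal.ofReal ‖∑' n, F n ω‖ ∂P
      ≤ ∫⁻ ω, ∑' n, (‖F n ω‖₊ : ℝ≥0∞) ∂P := by
        refine lintegral_mono_ae ?_
        filter_upwards [hae] with ω hω
        calc ENNReal.ofReal ‖∑' n, F n ω‖ ≤ ENNReal.ofReal (∑' n, ‖F n ω‖) :=
              ENNReal.ofReal_le_ofReal (norm_tsum_le_tsum_norm hω)
          _ = ∑' n, ENNReal.ofReal ‖F n ω‖ :=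
              ENNReal.ofReal_tsum_of_nonneg (fun n => norm_nonneg _) hω
          _ = ∑' n, (‖F n ω‖₊ : ℝ≥0∞) := by
              simp_rw [ofReal_norm_eq_enorm, enorm_eq_nnnorm]
    _ < ⊤ := h3.lt_top

/-- unbiasedness of the time-averaged coupled MCMC estimator
`(1/(m−k+1)) ∑_{n=k}^m φ(X_n)
  + ∑_{n=k+1}^{τ−1} min{1, (n−k)/(m−k+1)} (φ(X_n) − φ(W_n))`. -/
theorem time_averaged_coupled_mcmc_estimator_unbiased
    {Ω : Type*} [MeasurableSpace Ω] (P : Measure Ω) [IsProbabilityMeasure P]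
    {X : Type*} [MeasurableSpace X]
    (φ : X → ℝ) (hφmeas : Measurable φ) (Cφ : ℝ) (hφbdd : ∀ x, |φ x| ≤ Cφ)
    (Xs Ws : ℕ → Ω → X)
    (hXmeas : ∀ n, Measurable (Xs n)) (hWmeas : ∀ n, Measurable (Ws n))
    (hlaw : ∀ n : ℕ, Measure.map (Xs n) P = Measure.map (Ws (n + 1)) P)
    (τ : Ω → ℕ) (hτmeas : Measurable τ)
    (hτtail : Summable (fun n : ℕ => (P {ω | n < τ ω}).toReal))
    (hfaithful : ∀ n : ℕ, ∀ᵐ ω ∂P, τ ω ≤ n → Xs n ω = Ws n ω)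
    (a : ℝ)
    (hconv : Tendsto (fun n => ∫ ω, φ (Xs n ω) ∂P) atTop (nhds a)) :
    ∀ k m : ℕ, k ≤ m →
      Integrable (fun ω =>
        (1 / ((m : ℝ) - (k : ℝ) + 1)) * ∑ n ∈ Finset.Icc k m, φ (Xs n ω) +
        ∑ n ∈ Finset.Ico (k + 1) (τ ω),
          min 1 (((n : ℝ) - (k : ℝ)) / ((m : ℝ) - (k : ℝ) + 1)) *
            (φ (Xs n ω) - φ (Ws n ω))) P ∧
      ∫ ω, ((1 / ((m : ℝ) - (k : ℝ) + 1)) * ∑ n ∈ Finset.Icc k m, φ (Xs n ω) +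
        ∑ n ∈ Finset.Ico (k + 1) (τ ω),
          min 1 (((n : ℝ) - (k : ℝ)) / ((m : ℝ) - (k : ℝ) + 1)) *
            (φ (Xs n ω) - φ (Ws n ω))) ∂P = a := by
  intro k m hkm
  have hkmR : (k : ℝ) ≤ (m : ℝ) := Nat.cast_le.mpr hkm
  set M : ℝ := (m : ℝ) - (k : ℝ) + 1 with hMdef
  have hMpos : 0 < M := by rw [hMdef]; linarith
  -- basic facts
  have hΩ : Nonempty Ω := by
    by_contra h
    rw [not_nonempty_iff] at h
    have h1 : P Set.univ = 1 := measure_univ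
    rw [Set.univ_eq_empty_iff.mpr h] at h1
    simp at h1
  have hCφ : 0 ≤ Cφ := (abs_nonneg _).trans (hφbdd (Xs 0 (Classical.arbitrary Ω)))
  have hintX : ∀ n, Integrable (fun ω => φ (Xs n ω)) P := by
    intro n
    refine Integrable.mono' (integrable_const Cφ)
      (hφmeas.comp (hXmeas n)).aestronglyMeasurable (ae_of_all _ fun ω => ?_)
    simpa using hφbdd (Xs n ω)
  have hintW : ∀ n, Integrable (fun ω => φ (Ws n ω)) P := by
    intro n
    refine Integrable.mono' (integrable_const Cφ)
      (hφmeas.comp (hWmeas n)).aestronglyMeasurable (ae_of_all _ fun ω => ?_)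
    simpa using hφbdd (Ws n ω)
  set b : ℕ → ℝ := fun n => ∫ ω, φ (Xs n ω) ∂P with hbdef
  set c : ℕ → ℝ := fun n => min 1 (((n : ℝ) - (k : ℝ)) / M) with hcdef
  have hbW : ∀ n : ℕ, ∫ ω, φ (Ws (n + 1) ω) ∂P = b n := by
    intro n
    rw [hbdef]
    simp only
    rw [← integral_map (hXmeas n).aemeasurable hφmeas.aestronglyMeasurable, hlaw n,
      integral_map (hWmeas (n + 1)).aemeasurable hφmeas.aestronglyMeasurable]
  have hτset : ∀ n : ℕ, MeasurableSet {ω | n < τ ω} := fun n =>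
    hτmeas measurableSet_Ioi
  set g : ℕ → Ω → ℝ := fun n ω =>
    if n < τ ω then (if k + 1 ≤ n then c n * (φ (Xs n ω) - φ (Ws n ω)) else 0) else 0
    with hgdef
  have hgmeas : ∀ n, Measurable (g n) := by
    intro n
    rw [hgdef]
    refine Measurable.ite (hτset n) ?_ measurable_const
    by_cases h : k + 1 ≤ n
    · simp only [h, if_true]
      exact ((hφmeas.comp (hXmeas n)).sub (hφmeas.comp (hWmeas n))).const_mul _
    · simp only [h, if_false]
      exact measurable_const
  have hcmem : ∀ n, k + 1 ≤ n → 0 ≤ c n ∧ c n ≤ 1 := by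
    intro n hn
    constructor
    · rw [hcdef]
      simp only [le_min_iff]
      constructor
      · positivity
      · apply div_nonneg _ hMpos.le
        have : (k : ℝ) + 1 ≤ (n : ℝ) := by exact_mod_cast hn
        linarith
    · exact min_le_left _ _
  have hgbound : ∀ n ω, ‖g n ω‖ ≤ Set.indicator {ω | n < τ ω} (fun _ => 2 * Cφ) ω := by
    intro n ω
    by_cases h : n < τ ω
    · rw [Set.indicator_of_mem (show ω ∈ {ω | n < τ ω} from h)]
      rw [hgdef]
      simp only [h, if_true]
      by_cases h2 : k + 1 ≤ n
      · simp only [h2, if_true]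
        rw [Real.norm_eq_abs, abs_mul]
        obtain ⟨hc0, hc1⟩ := hcmem n h2
        calc |c n| * |φ (Xs n ω) - φ (Ws n ω)| ≤ 1 * (2 * Cφ) := by
              apply mul_le_mul (by rwa [abs_of_nonneg hc0]) ?_ (abs_nonneg _) zero_le_one
              calc |φ (Xs n ω) - φ (Ws n ω)| ≤ |φ (Xs n ω)| + |φ (Ws n ω)| := abs_sub _ _
                _ ≤ 2 * Cφ := by
                    have := hφbdd (Xs n ω); have := hφbdd (Ws n ω); linarith
          _ = 2 * Cφ := one_mul _
      · simp only [h2, if_false, norm_zero]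
        linarith
    · rw [Set.indicator_of_notMem (show ω ∉ {ω | n < τ ω} from h), hgdef]
      simp [h]
  have hgint : ∀ n, Integrable (g n) P := by
    intro n
    refine Integrable.mono' ((integrable_const (2 * Cφ)).indicator (hτset n))
      (hgmeas n).aestronglyMeasurable (ae_of_all _ (hgbound n))
  have hgnorm : ∀ n, ∫ ω, ‖g n ω‖ ∂P ≤ 2 * Cφ * (P {ω | n < τ ω}).toReal := by
    intro n
    have h := integral_mono ((hgint n).norm)
      ((integrable_const (2 * Cφ)).indicator (hτset n)) (hgbound n)
    rwa [integral_indicator_const _ (hτset n), smul_eq_mul, mul_comm] at h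
  have hsumnorm : Summable (fun n => ∫ ω, ‖g n ω‖ ∂P) := by
    refine Summable.of_nonneg_of_le (fun n => integral_nonneg fun ω => norm_nonneg _)
      hgnorm (hτtail.mul_left (2 * Cφ))
  -- pointwise identification of the estimator's second term with the tsum of g
  have hSpointwise : ∀ ω, (∑ n ∈ Finset.Ico (k + 1) (τ ω),
      min 1 (((n : ℝ) - (k : ℝ)) / M) * (φ (Xs n ω) - φ (Ws n ω))) = ∑' n, g n ω := by
    intro ω
    rw [tsum_eq_sum (s := Finset.Ico (k + 1) (τ ω)) ?_]
    · refine Finset.sum_congr rfl fun n hn => ?_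
      rw [Finset.mem_Ico] at hn
      simp [hgdef, hn.1, hn.2, hcdef, show ¬ n ≤ k by omega]
    · intro n hn
      rw [Finset.mem_Ico, not_and_or] at hn
      rw [hgdef]
      rcases hn with h | h
      · by_cases h2 : n < τ ω <;> simp [h, h2]
      · simp [not_lt.mp (by simpa using h)]
  -- integral of g n
  have hIzero : ∀ n, n < k + 1 → ∫ ω, g n ω ∂P = 0 := by
    intro n hn
    have : g n = fun _ => (0 : ℝ) := by
      funext ω; rw [hgdef]; simp [Nat.not_le.mpr hn]
    rw [this, integral_zero]
  have hIeq : ∀ n, k + 1 ≤ n → ∫ ω, g n ω ∂P = c n * (b n - b (n - 1)) := by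
    intro n hn
    have hae : g n =ᵐ[P] fun ω => c n * (φ (Xs n ω) - φ (Ws n ω)) := by
      filter_upwards [hfaithful n] with ω hω
      rw [hgdef]
      by_cases h : n < τ ω
      · simp [h, hn]
      · have hXW : Xs n ω = Ws n ω := hω (Nat.le_of_not_lt h)
        simp [h, hXW]
    rw [integral_congr_ae hae]
    rw [integral_const_mul]
    rw [integral_sub (hintX n) (hintW n)]
    obtain ⟨j, rfl⟩ : ∃ j, n = j + 1 := ⟨n - 1, by omega⟩
    rw [hbW j]
    simp [hbdef]
  -- telescoping, part 1 (ramp region)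
  have hR : ∀ N, k ≤ N → N ≤ m + 1 →
      (∑ n ∈ Finset.Ico (k + 1) (N + 1), c n * (b n - b (n - 1))) =
        ((N : ℝ) - (k : ℝ)) / M * b N - (1 / M) * ∑ n ∈ Finset.Ico k N, b n := by
    intro N hkN
    induction N, hkN using Nat.le_induction with
    | base =>
      intro _
      simp
    | succ N hkN ih =>
      intro hle
      have hNm : N ≤ m := by omega
      rw [Finset.sum_Ico_succ_top (by omega : k + 1 ≤ N + 1), ih (by omega)]
      rw [Finset.sum_Ico_succ_top (hkN : k ≤ N)]
      simp only [Nat.add_sub_cancel]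
      have hcval : c (N + 1) = ((N : ℝ) + 1 - (k : ℝ)) / M := by
        rw [hcdef]
        simp only
        rw [min_eq_right]
        · push_cast; ring_nf
        · rw [div_le_one hMpos, hMdef]
          push_cast
          have : (N : ℝ) ≤ (m : ℝ) := Nat.cast_le.mpr hNm
          linarith
      rw [hcval]
      push_cast
      field_simp
      ring
  -- telescoping, part 2 (flat region)
  have hC : ∀ N, m + 1 ≤ N →
      (∑ n ∈ Finset.Ico (k + 1) (N + 1), c n * (b n - b (n - 1))) =
        b N - (1 / M) * ∑ n ∈ Finset.Icc k m, b n := by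
    intro N hmN
    induction N, hmN using Nat.le_induction with
    | base =>
      rw [hR (m + 1) (by omega) le_rfl]
      have h1 : ((m : ℝ) + 1 - (k : ℝ)) / M = 1 := by
        rw [div_eq_one_iff_eq hMpos.ne', hMdef]; ring
      have h2 : (((m + 1 : ℕ) : ℝ) - (k : ℝ)) = (m : ℝ) + 1 - (k : ℝ) := by push_cast; ring
      rw [h2, h1, one_mul, ← Finset.Ico_add_one_right_eq_Icc]
    | succ N hmN ih =>
      rw [Finset.sum_Ico_succ_top (by omega : k + 1 ≤ N + 1), ih]
      simp only [Nat.add_sub_cancel]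
      have hcval : c (N + 1) = 1 := by
        rw [hcdef]
        simp only
        rw [min_eq_left]
        rw [le_div_iff₀ hMpos, one_mul, hMdef]
        push_cast
        have : (m : ℝ) + 1 ≤ (N : ℝ) := by exact_mod_cast hmN
        linarith
      rw [hcval]
      ring
  -- partial sums of integrals
  have hpart : ∀ N, ∑ n ∈ Finset.range N, ∫ ω, g n ω ∂P =
      ∑ n ∈ Finset.Ico (k + 1) N, c n * (b n - b (n - 1)) := by
    intro N
    rw [← Finset.sum_subset (fun n hn => Finset.mem_range.mpr (Finset.mem_Ico.mp hn).2 : Finset.Ico (k+1) N ⊆ Finset.range N) ?_]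
    · exact Finset.sum_congr rfl fun n hn => hIeq n (Finset.mem_Ico.mp hn).1
    · intro n hn hn2
      rw [Finset.mem_range] at hn
      rw [Finset.mem_Ico, not_and_or] at hn2
      rcases hn2 with h | h
      · exact hIzero n (Nat.lt_of_not_le h)
      · omega
  -- sum of integrals converges
  have hhs : HasSum (fun n => ∫ ω, g n ω ∂P) (∫ ω, ∑' n, g n ω ∂P) :=
    MeasureTheory.hasSum_integral_of_summable_integral_norm hgint hsumnorm
  set C : ℝ := (1 / M) * ∑ n ∈ Finset.Icc k m, b n with hCdef
  have htend1 : Tendsto (fun N : ℕ => b (N - 1)) atTop (nhds a) :=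
    hconv.comp (tendsto_sub_atTop_nat 1)
  have htend : Tendsto (fun N => ∑ n ∈ Finset.range N, ∫ ω, g n ω ∂P) atTop (nhds (a - C)) := by
    refine Tendsto.congr' ?_ (htend1.sub tendsto_const_nhds)
    filter_upwards [eventually_ge_atTop (m + 2)] with N hN
    obtain ⟨j, rfl⟩ : ∃ j, N = j + 1 := ⟨N - 1, by omega⟩
    rw [hpart (j + 1), hC j (by omega)]
    simp [hCdef]
  have hint_tsum : ∫ ω, ∑' n, g n ω ∂P = a - C :=
    tendsto_nhds_unique hhs.tendsto_sum_nat htend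
  -- reassemble
  have hT1int : Integrable (fun ω => (1 / M) * ∑ n ∈ Finset.Icc k m, φ (Xs n ω)) P :=
    (integrable_finset_sum _ (fun n _ => hintX n)).const_mul _
  have hT2int : Integrable (fun ω => ∑' n, g n ω) P :=
    aux_integrable_tsum hgmeas hgint hsumnorm
  have hfeq : (fun ω =>
      (1 / M) * ∑ n ∈ Finset.Icc k m, φ (Xs n ω) +
      ∑ n ∈ Finset.Ico (k + 1) (τ ω), min 1 (((n : ℝ) - (k : ℝ)) / M) * (φ (Xs n ω) - φ (Ws n ω)))
      = fun ω => (1 / M) * ∑ n ∈ Finset.Icc k m, φ (Xs n ω) + ∑' n, g n ω := by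
    funext ω; rw [hSpointwise ω]
  rw [hfeq]
  refine ⟨hT1int.add hT2int, ?_⟩
  rw [integral_add hT1int hT2int, hint_tsum, integral_const_mul,
    integral_finset_sum _ (fun n _ => hintX n)]
  rw [hCdef]
  simp only [hbdef]
  ring
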